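/- arXiv:1702.04002 — 3 statements merged into one kernel-verified Lean document; each statement's English description precedes it below -/
import Mathlib

section
/- Let X be a finite-dimensional real vector space and q an asymmetric norm on X. Let E denote the set of extreme points of B_1^q[0] + θ_q, and let S = conv(E) be its convex hull. Then B_1^q[0] = S + θ_q. -/
open Pointwise Set

/-- An asymmetric norm on a real vector space `X`. -/
structure IsAsymmetricNorm {X : Type*} [AddCommGroup X] [Module ℝ X] (q : X → ℝ) : Prop where
  nonneg : ∀ x, 0 ≤ q x
  smul_eq : ∀ a : ℝ, 0 ≤ a → ∀ x, q (a • x) = a * q x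
  add_le : ∀ x y, q (x + y) ≤ q x + q y
  eq_zero : ∀ x, q x = 0 → q (-x) = 0 → x = 0

/-- The topology `τ_q` generated by the open balls of `q`. -/
def asymTop {X : Type*} [AddCommGroup X] [Module ℝ X] (q : X → ℝ) : TopologicalSpace X :=
  TopologicalSpace.generateFrom {U | ∃ x : X, ∃ ε : ℝ, 0 < ε ∧ U = {y | q (y - x) < ε}}

/-- The symmetrization `q^s` of `q`. -/
def symNorm {X : Type*} [AddCommGroup X] (q : X → ℝ) (x : X) : ℝ := max (q x) (q (-x))

/-- The cone `θ_q = {x : q x = 0}`. -/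
def theta {X : Type*} [AddCommGroup X] (q : X → ℝ) : Set X := {x | q x = 0}

/-- The closed ball `B_r^q[x] = {y : q (y - x) ≤ r}`. -/
def closedBallA {X : Type*} [AddCommGroup X] (q : X → ℝ) (x : X) (r : ℝ) : Set X :=
  {y | q (y - x) ≤ r}

/-- A set `K` is strongly compact (w.r.t. the asymmetric norm `q`) if there is a set `S`,
compact in the topology of the norm `q^s`, with `S ⊆ K ⊆ S + θ_q`. -/
def StronglyCompact {X : Type*} [AddCommGroup X] [Module ℝ X] (q : X → ℝ) (K : Set X) : Prop :=
  ∃ S : Set X, @IsCompact X (asymTop (symNorm q)) S ∧ S ⊆ K ∧ K ⊆ S + theta q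

/-- `q` is right bounded if `r • B_1^q[0] ⊆ B_1^{q^s}[0] + θ_q` for some `r > 0`. -/
def RightBounded {X : Type*} [AddCommGroup X] [Module ℝ X] (q : X → ℝ) : Prop :=
  ∃ r : ℝ, 0 < r ∧ r • closedBallA q 0 1 ⊆ closedBallA (symNorm q) 0 1 + theta q

/-- `q` is 1-bounded if `B_1^q[0] ⊆ B_1^{q^s}[0] + θ_q`. -/
def OneBounded {X : Type*} [AddCommGroup X] [Module ℝ X] (q : X → ℝ) : Prop :=
  closedBallA q 0 1 ⊆ closedBallA (symNorm q) 0 1 + theta q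

/-- Two asymmetric norms are equivalent if `κ·q ≤ p ≤ l·q` for some `κ, l > 0`. -/
def EquivNorms {X : Type*} [AddCommGroup X] (p q : X → ℝ) : Prop :=
  ∃ κ l : ℝ, 0 < κ ∧ 0 < l ∧ ∀ x, κ * q x ≤ p x ∧ p x ≤ l * q x

/-- `X` is strongly locally compact (w.r.t. `τ_q`) if every point has a local base of
strongly compact sets. -/
def StronglyLocallyCompact {X : Type*} [AddCommGroup X] [Module ℝ X] (q : X → ℝ) : Prop :=
  ∀ x : X, ∀ U ∈ @nhds X (asymTop q) x,
    ∃ K : Set X, StronglyCompact q K ∧ K ∈ @nhds X (asymTop q) x ∧ K ⊆ U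


open Module Filter

/-- The recession cone of a set. -/
def recc {E : Type*} [AddCommGroup E] [Module ℝ E] (A : Set E) : Set E :=
  {v | ∀ x ∈ A, ∀ t : ℝ, 0 ≤ t → x + t • v ∈ A}

/-- A set containing no full lines. -/
def LineFree {E : Type*} [AddCommGroup E] [Module ℝ E] (A : Set E) : Prop :=
  ∀ x ∈ A, ∀ v : E, (∀ t : ℝ, x + t • v ∈ A) → v = 0

section Basic
variable {E : Type*} [AddCommGroup E] [Module ℝ E] {A : Set E} {v w : E}

lemma zero_mem_recc : (0 : E) ∈ recc A := fun x hx t _ => by simpa using hx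

lemma recc_add (hv : v ∈ recc A) (hw : w ∈ recc A) : v + w ∈ recc A := fun x hx t ht => by
  have := hw _ (hv x hx t ht) t ht
  rwa [add_assoc, ← smul_add] at this

lemma recc_smul {a : ℝ} (ha : 0 ≤ a) (hv : v ∈ recc A) : a • v ∈ recc A := fun x hx t ht => by
  rw [smul_smul]
  exact hv x hx (t * a) (mul_nonneg ht ha)

lemma convex_recc (A : Set E) : Convex ℝ (recc A) := fun v hv w hw a b ha hb _ =>
  recc_add (recc_smul ha hv) (recc_smul hb hw)

lemma mem_add_recc_of_mem {S : Set E} {p r : E} (hp : p ∈ S + recc A) (hr : r ∈ recc A) :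
    p + r ∈ S + recc A := by
  obtain ⟨u, hu, r₀, hr₀, rfl⟩ := hp
  exact ⟨u, hu, r₀ + r, recc_add hr₀ hr, (add_assoc u r₀ r).symm⟩

/-- Extreme points of the image of an injective affine map. -/
lemma extremePoints_image_affine {F : Type*} [AddCommGroup F] [Module ℝ F]
    (f : E →ᵃ[ℝ] F) (hf : Function.Injective f) (s : Set E) :
    Set.extremePoints ℝ (f '' s) = f '' Set.extremePoints ℝ s := by
  ext b
  constructor
  · rintro ⟨⟨a, ha, rfl⟩, h⟩
    refine ⟨a, ⟨ha, fun x₁ hx₁ x₂ hx₂ hseg => ?_⟩, rfl⟩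
    have := h ⟨x₁, hx₁, rfl⟩ ⟨x₂, hx₂, rfl⟩ (by
      rw [← image_openSegment]
      exact Set.mem_image_of_mem f hseg)
    exact hf this
  · rintro ⟨a, ⟨ha, h⟩, rfl⟩
    refine ⟨⟨a, ha, rfl⟩, ?_⟩
    rintro _ ⟨x₁, hx₁, rfl⟩ _ ⟨x₂, hx₂, rfl⟩ hseg
    rw [← image_openSegment] at hseg
    obtain ⟨c, hc, hcf⟩ := hseg
    obtain rfl : c = a := hf hcf
    rw [h hx₁ hx₂ hc]

end Basic

section NormedRecc
variable {E : Type*} [NormedAddCommGroup E] [NormedSpace ℝ E] {A : Set E} {v : E}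

/-- If a closed convex set contains a ray, the direction is in the recession cone. -/
lemma mem_recc_of_ray (hcl : IsClosed A) (hco : Convex ℝ A) {z : E} (hz : z ∈ A)
    (h : ∀ t : ℝ, 0 ≤ t → z + t • v ∈ A) : v ∈ recc A := by
  intro y hy t ht
  rcases eq_or_lt_of_le ht with rfl | ht
  · simpa using hy
  · have h0 : Tendsto (fun s : ℝ => t / s) atTop (nhds 0) := by
      simpa [div_eq_mul_inv] using tendsto_inv_atTop_zero.const_mul t
    have key : Tendsto (fun s : ℝ => (1 - t / s) • y + (t / s) • (z + s • v)) atTop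
        (nhds (y + t • v)) := by
      apply Tendsto.congr' (f₁ := fun s : ℝ => (y + t • v) + (t / s) • (z - y))
      · filter_upwards [eventually_gt_atTop (0 : ℝ)] with s hs
        have hts : (t / s) * s = t := div_mul_cancel₀ t hs.ne'
        calc (y + t • v) + (t / s) • (z - y)
            = (1 - t / s) • y + (t / s) • z + ((t / s) * s) • v := by
              rw [hts]; module
          _ = (1 - t / s) • y + (t / s) • (z + s • v) := by
              rw [mul_smul]; module
      · have : Tendsto (fun s : ℝ => (t / s) • (z - y)) atTop (nhds ((0:ℝ) • (z - y))) :=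
          h0.smul_const (z - y)
        simpa using tendsto_const_nhds.add this
    refine hcl.mem_of_tendsto key ?_
    filter_upwards [eventually_ge_atTop (max t 1)] with s hs
    have hs1 : (0:ℝ) < s := lt_of_lt_of_le one_pos (le_trans (le_max_right t 1) hs)
    have hts : 0 ≤ t / s := div_nonneg ht.le hs1.le
    have hts1 : t / s ≤ 1 := (div_le_one hs1).2 (le_trans (le_max_left t 1) hs)
    exact hco hy (h s hs1.le) (by linarith) hts (by ring)
end NormedRecc

/-- Statement of Klee's theorem, for induction. -/
def KleeStmt (n : ℕ) : Prop :=
  ∀ (E : Type) [NormedAddCommGroup E] [NormedSpace ℝ E] [FiniteDimensional ℝ E] (A : Set E),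
    IsClosed A → Convex ℝ A → LineFree A →
    finrank ℝ (affineSpan ℝ A).direction ≤ n →
    A ⊆ convexHull ℝ (Set.extremePoints ℝ A) + recc A

section Reach
variable {E : Type} [NormedAddCommGroup E] [NormedSpace ℝ E] [FiniteDimensional ℝ E]
  {A : Set E} {n : ℕ}

/-- The endpoint of a maximal segment inside `A` lies in `conv(ext A) + recc A`. -/
lemma klee_reach (IH : ∀ m, m < n → KleeStmt m)
    (hcl : IsClosed A) (hco : Convex ℝ A) (hlf : LineFree A)
    (hdim : finrank ℝ E ≤ n) (hint : (interior A).Nonempty)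
    {x v : E} (hx : x ∈ A) (hv : v ≠ 0)
    (hba : BddAbove {t : ℝ | x + t • v ∈ A}) :
    x + sSup {t : ℝ | x + t • v ∈ A} • v ∈
      convexHull ℝ (Set.extremePoints ℝ A) + recc A := by
  set I := {t : ℝ | x + t • v ∈ A} with hI
  have hI0 : (0 : ℝ) ∈ I := by simpa [hI] using hx
  have hIcl : IsClosed I := (hcl.preimage (by continuity : Continuous fun t : ℝ => x + t • v))
  set b := sSup I with hb
  have hbI : b ∈ I := hIcl.csSup_mem ⟨0, hI0⟩ hba
  set z := x + b • v with hz
  have hzA : z ∈ A := hbI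
  -- z is not in the interior of A
  have hno : z ∉ interior A := by
    intro hzi
    obtain ⟨ε, hε, hball⟩ := Metric.isOpen_iff.1 isOpen_interior z hzi
    have hvn : (0:ℝ) < ‖v‖ := norm_pos_iff.2 hv
    set δ := ε / (2 * ‖v‖) with hδ
    have hδ0 : 0 < δ := by positivity
    have hmem : z + δ • v ∈ A := by
      refine interior_subset (hball ?_)
      rw [Metric.mem_ball, dist_eq_norm, add_sub_cancel_left, norm_smul,
        Real.norm_eq_abs, abs_of_pos hδ0]
      rw [hδ]
      rw [div_mul_eq_mul_div, mul_comm]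
      rw [mul_div_assoc]
      calc ‖v‖ * (ε / (2 * ‖v‖)) = ε / 2 := by field_simp
        _ < ε := by linarith
    have : b + δ ∈ I := by
      show x + (b + δ) • v ∈ A
      rw [add_smul, ← add_assoc]
      exact hmem
    have := le_csSup hba this
    linarith
  -- supporting functional
  obtain ⟨f, hf⟩ := geometric_hahn_banach_open_point hco.interior isOpen_interior hno
  obtain ⟨a₀, ha₀⟩ := hint
  have hfA : ∀ a ∈ A, f a ≤ f z := by
    intro a ha
    by_contra hlt
    push_neg at hlt
    -- consider combos (1-t) a + t a₀ ∈ interior A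
    set M := |f a₀ - f a| with hM
    set t₀ : ℝ := min 1 ((f a - f z) / (M + 1)) with ht₀
    have hM0 : 0 ≤ M := abs_nonneg _
    have ht₀0 : 0 < t₀ := lt_min one_pos (div_pos (by linarith) (by linarith))
    have ht₀1 : t₀ ≤ 1 := min_le_left _ _
    have hcombo : (1 - t₀) • a + t₀ • a₀ ∈ interior A :=
      hco.combo_self_interior_mem_interior ha ha₀ (by linarith) ht₀0 (by ring)
    have hflt := hf _ hcombo
    rw [map_add, map_smul, map_smul, smul_eq_mul, smul_eq_mul] at hflt
    have ht₀le : t₀ * (M + 1) ≤ f a - f z := by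
      have := min_le_right 1 ((f a - f z) / (M + 1))
      calc t₀ * (M + 1) ≤ ((f a - f z) / (M + 1)) * (M + 1) := by
            apply mul_le_mul_of_nonneg_right this (by linarith)
        _ = f a - f z := by field_simp
    have habs : -(M) ≤ f a₀ - f a := neg_abs_le _
    nlinarith
  -- the exposed face
  set F := {y ∈ A | ∀ a ∈ A, f a ≤ f y} with hF
  have hzF : z ∈ F := ⟨hzA, hfA⟩
  have hexp : IsExposed ℝ A F := fun _ => ⟨f, rfl⟩
  have hFA : F ⊆ A := fun y hy => hy.1
  have hFcl : IsClosed F := hexp.isClosed hcl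
  have hFco : Convex ℝ F := hexp.convex hco
  have hFlf : LineFree F := fun y hy w hw => hlf y (hFA hy) w fun t => hFA (hw t)
  -- dimension drop
  have hfz : ∀ y ∈ F, f y = f z := fun y hy => le_antisymm (hfA y hy.1) (hy.2 z hzA)
  have hdirF : (affineSpan ℝ F).direction ≤ LinearMap.ker (f : E →ₗ[ℝ] ℝ) := by
    rw [direction_affineSpan, vectorSpan_def]
    rw [Submodule.span_le]
    rintro u ⟨p, hp, r, hr, rfl⟩
    simp only [SetLike.mem_coe, LinearMap.mem_ker, ContinuousLinearMap.coe_coe, vsub_eq_sub,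
      map_sub]
    rw [hfz p hp, hfz r hr, sub_self]
  have hker_lt : LinearMap.ker (f : E →ₗ[ℝ] ℝ) < ⊤ := by
    rw [lt_top_iff_ne_top]
    intro htop
    have h1 : a₀ - z ∈ LinearMap.ker (f : E →ₗ[ℝ] ℝ) := htop ▸ Submodule.mem_top
    rw [LinearMap.mem_ker] at h1
    simp only [ContinuousLinearMap.coe_coe, map_sub] at h1
    have h2 := hf a₀ ha₀
    linarith
  have hdF : finrank ℝ (affineSpan ℝ F).direction < n := by
    calc finrank ℝ (affineSpan ℝ F).direction
        ≤ finrank ℝ (LinearMap.ker (f : E →ₗ[ℝ] ℝ)) := Submodule.finrank_mono hdirF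
      _ < finrank ℝ (⊤ : Submodule ℝ E) := Submodule.finrank_lt_finrank_of_lt hker_lt
      _ = finrank ℝ E := finrank_top ℝ E
      _ ≤ n := hdim
  -- apply the inductive hypothesis to F
  have hzT := IH _ hdF E F hFcl hFco hFlf le_rfl hzF
  obtain ⟨u, hu, r, hr, hur⟩ := hzT
  refine ⟨u, ?_, r, ?_, hur⟩
  · exact convexHull_mono (hexp.isExtreme.extremePoints_subset_extremePoints) hu
  · exact mem_recc_of_ray hcl hco (hFA hzF) fun t ht => hFA (hr z hzF t ht)

end Reach

section Top
variable {E : Type} [NormedAddCommGroup E] [NormedSpace ℝ E] [FiniteDimensional ℝ E]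
  {A : Set E} {n : ℕ}

/-- One-sided case: the segment is bounded in direction `v` and unbounded in direction `-v`. -/
lemma klee_onesided (IH : ∀ m, m < n → KleeStmt m)
    (hcl : IsClosed A) (hco : Convex ℝ A) (hlf : LineFree A)
    (hdim : finrank ℝ E ≤ n) (hint : (interior A).Nonempty)
    {x v : E} (hx : x ∈ A) (hv : v ≠ 0)
    (hba : BddAbove {t : ℝ | x + t • v ∈ A})
    (hray : ∀ t : ℝ, 0 ≤ t → x + t • (-v) ∈ A) :
    x ∈ convexHull ℝ (Set.extremePoints ℝ A) + recc A := by
  have hmv : -v ∈ recc A := mem_recc_of_ray hcl hco hx hray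
  set I := {t : ℝ | x + t • v ∈ A} with hI
  have hI0 : (0 : ℝ) ∈ I := by simpa [hI] using hx
  have hIcl : IsClosed I := (hcl.preimage (by continuity : Continuous fun t : ℝ => x + t • v))
  set b := sSup I with hb
  have hb0 : 0 ≤ b := le_csSup hba hI0
  have hz := klee_reach IH hcl hco hlf hdim hint hx hv hba
  have : x + b • v + b • (-v) = x := by
    rw [smul_neg, add_assoc, add_neg_cancel, add_zero]
  rw [← this]
  exact mem_add_recc_of_mem hz (recc_smul hb0 hmv)

/-- Klee's theorem in the full-dimensional case. -/
lemma klee_top (IH : ∀ m, m < n → KleeStmt m)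
    (hcl : IsClosed A) (hco : Convex ℝ A) (hlf : LineFree A)
    (hdim : finrank ℝ E ≤ n) (hint : (interior A).Nonempty) :
    A ⊆ convexHull ℝ (Set.extremePoints ℝ A) + recc A := by
  intro x hx
  set T := convexHull ℝ (Set.extremePoints ℝ A) + recc A with hT
  have hTconv : Convex ℝ T := (convex_convexHull ℝ _).add (convex_recc A)
  by_cases hxe : x ∈ Set.extremePoints ℝ A
  · have := Set.add_mem_add (subset_convexHull ℝ _ hxe) (zero_mem_recc (A := A))
    simpa using this
  · -- x is in the open segment of two distinct points of A
    rw [mem_extremePoints] at hxe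
    push_neg at hxe
    obtain ⟨x₁, hx₁, x₂, hx₂, hseg, hne⟩ := hxe hx
    obtain ⟨a, c, ha, hc, hac, hsum⟩ := hseg
    have hx12 : x₁ ≠ x₂ := by
      rintro rfl
      have h1 : x₁ = x := by
        rw [← hsum, ← add_smul, hac, one_smul]
      exact hne h1 h1
    set v := x₂ - x₁ with hv
    have hvne : v ≠ 0 := sub_ne_zero.2 (Ne.symm hx12)
    have hxa : x + a • v = x₂ := by
      rw [hv, ← hsum]
      calc a • x₁ + c • x₂ + a • (x₂ - x₁) = (a + c) • x₂ := by module
        _ = x₂ := by rw [hac, one_smul]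
    have hxc : x + (-c) • v = x₁ := by
      rw [hv, ← hsum]
      calc a • x₁ + c • x₂ + (-c) • (x₂ - x₁) = (a + c) • x₁ := by module
        _ = x₁ := by rw [hac, one_smul]
    set I := {t : ℝ | x + t • v ∈ A} with hI
    have hI0 : (0 : ℝ) ∈ I := by simpa [hI] using hx
    have haI : a ∈ I := by rw [hI, Set.mem_setOf_eq, hxa]; exact hx₂
    have hcI : -c ∈ I := by rw [hI, Set.mem_setOf_eq, hxc]; exact hx₁
    have hIconv : Convex ℝ I := by
      intro t₁ h₁ t₂ h₂ p r hp hr hpr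
      have hmem := hco h₁ h₂ hp hr hpr
      have : p • (x + t₁ • v) + r • (x + t₂ • v) = x + (p • t₁ + r • t₂) • v := by
        calc p • (x + t₁ • v) + r • (x + t₂ • v)
            = (p + r) • x + (p * t₁ + r * t₂) • v := by module
          _ = x + (p • t₁ + r • t₂) • v := by
              rw [hpr, one_smul, smul_eq_mul, smul_eq_mul]
      rwa [this] at hmem
    -- J is the parameter set in direction -v
    set J := {t : ℝ | x + t • (-v) ∈ A} with hJ
    have hJI : ∀ t : ℝ, t ∈ J ↔ -t ∈ I := by
      intro t
      rw [hI, hJ, Set.mem_setOf_eq, Set.mem_setOf_eq, smul_neg, ← neg_smul]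
    by_cases hbA : BddAbove I
    · by_cases hbB : BddBelow I
      · -- bounded both ways: x is a combination of two reachable boundary points
        have hbaJ : BddAbove J := by
          obtain ⟨L, hL⟩ := hbB
          exact ⟨-L, fun t ht => by
            have := hL ((hJI t).1 ht)
            linarith⟩
        have hz₂ := klee_reach IH hcl hco hlf hdim hint hx hvne hbA
        have hz₁ := klee_reach IH hcl hco hlf hdim hint hx (neg_ne_zero.2 hvne) hbaJ
        set b₂ := sSup I with hb₂
        set s := sSup J with hs
        have hb₂a : a ≤ b₂ := le_csSup hbA haI
        have hsc : c ≤ s := le_csSup hbaJ ((hJI c).2 hcI)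
        have hd : (0:ℝ) < b₂ + s := by linarith
        have h1 : b₂ / (b₂ + s) + s / (b₂ + s) = 1 := by field_simp
        have hcombo := hTconv hz₁ hz₂ (div_nonneg (by linarith) hd.le) (div_nonneg (by linarith) hd.le) h1
        have heq : (b₂ / (b₂ + s)) • (x + s • (-v)) + (s / (b₂ + s)) • (x + b₂ • v) = x := by
          calc (b₂ / (b₂ + s)) • (x + s • (-v)) + (s / (b₂ + s)) • (x + b₂ • v)
              = (b₂ / (b₂ + s) + s / (b₂ + s)) • x
                + (s / (b₂ + s) * b₂ - b₂ / (b₂ + s) * s) • v := by module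
            _ = x := by
                rw [h1, show s / (b₂ + s) * b₂ - b₂ / (b₂ + s) * s = 0 by ring]
                simp
        rwa [heq] at hcombo
      · -- unbounded below: ray in direction -v
        refine klee_onesided IH hcl hco hlf hdim hint hx hvne hbA ?_
        intro t ht
        obtain ⟨t', ht', hlt⟩ := not_bddBelow_iff.1 hbB (-t)
        have : -t ∈ I := hIconv.ordConnected.out ht' hI0 ⟨hlt.le, by linarith⟩
        rwa [hI, Set.mem_setOf_eq, neg_smul, ← smul_neg] at this
    · by_cases hbB : BddBelow I
      · -- unbounded above: ray in direction v; use -v as the bounded direction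
        have hbaJ : BddAbove J := by
          obtain ⟨L, hL⟩ := hbB
          exact ⟨-L, fun t ht => by
            have := hL ((hJI t).1 ht)
            linarith⟩
        have := klee_onesided IH hcl hco hlf hdim hint hx (neg_ne_zero.2 hvne) hbaJ ?_
        · exact this
        · intro t ht
          obtain ⟨t', ht', hlt⟩ := not_bddAbove_iff.1 hbA t
          have : t ∈ I := hIconv.ordConnected.out hI0 ht' ⟨ht, hlt.le⟩
          rwa [neg_neg]
      · -- unbounded both ways: contradicts line-freeness
        exfalso
        apply hvne
        refine hlf x hx v fun t => ?_
        obtain ⟨t', ht', hlt'⟩ := not_bddAbove_iff.1 hbA t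
        obtain ⟨t'', ht'', hlt''⟩ := not_bddBelow_iff.1 hbB t
        exact hIconv.ordConnected.out ht'' ht' ⟨hlt''.le, hlt'.le⟩

end Top

/-- Klee's theorem: a line-free closed convex set in a finite-dimensional space is the sum of
the convex hull of its extreme points and its recession cone. -/
theorem klee (n : ℕ) : KleeStmt n := by
  induction n using Nat.strong_induction_on with
  | _ n IH =>
  intro E _ _ _ A hcl hco hlf hdim x hx
  classical
  set W := (affineSpan ℝ A).direction with hW
  -- the affine embedding of W into E, sending w to w + x
  set g : W →ᵃ[ℝ] E :=
    { toFun := fun w => (w : E) + x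
      linear := W.subtype
      map_vadd' := by
        intro p u
        show ((u + p : W) : E) + x = (u : E) + ((p : E) + x)
        push_cast
        rw [add_assoc] } with hg
  have hgeval : ∀ w : W, g w = (w : E) + x := fun w => rfl
  have ginj : Function.Injective g := by
    intro w₁ w₂ h
    have : (w₁ : E) + x = (w₂ : E) + x := h
    exact Subtype.coe_injective (add_right_cancel this)
  set A' : Set W := g ⁻¹' A with hA'
  have hmemA' : ∀ w : W, w ∈ A' ↔ (w : E) + x ∈ A := fun w => Iff.rfl
  have himg : g '' A' = A := by
    apply Set.Subset.antisymm
    · rintro _ ⟨w, hw, rfl⟩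
      exact hw
    · intro a ha
      have hmem : a - x ∈ W := by
        rw [hW]
        exact AffineSubspace.vsub_mem_direction (subset_affineSpan ℝ A ha)
          (subset_affineSpan ℝ A hx)
      exact ⟨⟨a - x, hmem⟩, by
        rw [hmemA']
        show (a - x) + x ∈ A
        rwa [sub_add_cancel], by
        rw [hgeval]
        exact sub_add_cancel a x⟩
  have h0A' : (0 : W) ∈ A' := by
    rw [hmemA']
    simpa using hx
  -- A' spans W
  have hvs : vectorSpan ℝ A' = (⊤ : Submodule ℝ W) := by
    apply Submodule.map_injective_of_injective W.injective_subtype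
    rw [Submodule.map_subtype_top]
    apply le_antisymm
    · exact Submodule.map_subtype_le _ _
    · have hWv : W ≤ vectorSpan ℝ A := by
        rw [hW, direction_affineSpan]
      refine le_trans hWv ?_
      rw [vectorSpan_def, Submodule.span_le]
      rintro _ ⟨p, hp, r, hr, rfl⟩
      have hpW : p - x ∈ W := by
        rw [hW]
        exact AffineSubspace.vsub_mem_direction (subset_affineSpan ℝ A hp)
          (subset_affineSpan ℝ A hx)
      have hrW : r - x ∈ W := by
        rw [hW]
        exact AffineSubspace.vsub_mem_direction (subset_affineSpan ℝ A hr)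
          (subset_affineSpan ℝ A hx)
      have hp' : (⟨p - x, hpW⟩ : W) ∈ A' := by rw [hmemA']; show (p - x) + x ∈ A; rwa [sub_add_cancel]
      have hr' : (⟨r - x, hrW⟩ : W) ∈ A' := by rw [hmemA']; show (r - x) + x ∈ A; rwa [sub_add_cancel]
      refine ⟨(⟨p - x, hpW⟩ : W) -ᵥ (⟨r - x, hrW⟩ : W), vsub_mem_vectorSpan ℝ hp' hr', ?_⟩
      show ((p - x) - (r - x) : E) = p -ᵥ r
      rw [vsub_eq_sub]
      abel
  have hspan : affineSpan ℝ A' = ⊤ := by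
    rw [← AffineSubspace.direction_eq_top_iff_of_nonempty ((affineSpan_nonempty ℝ).2 ⟨0, h0A'⟩)]
    rw [direction_affineSpan]
    exact hvs
  have hcl' : IsClosed A' :=
    hcl.preimage (by exact (continuous_subtype_val.add continuous_const))
  have hco' : Convex ℝ A' := hco.affine_preimage g
  have hlf' : LineFree A' := by
    intro w hw u hu
    have : (u : E) = 0 := by
      refine hlf ((w : E) + x) hw (u : E) fun t => ?_
      have h1 := hu t
      rw [hmemA'] at h1
      push_cast at h1
      have heq : (↑w + x) + t • (↑u : E) = ↑w + t • (↑u : E) + x := by abel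
      rwa [heq]
    exact Subtype.coe_injective (by simpa using this)
  have hdim' : finrank ℝ W ≤ n := hdim
  have hint' : (interior A').Nonempty :=
    hco'.interior_nonempty_iff_affineSpan_eq_top.2 hspan
  -- apply the full-dimensional case in W
  have hmain := klee_top IH hcl' hco' hlf' hdim' hint'
  have hwx : (⟨x - x, by simpa using (Submodule.zero_mem W)⟩ : W) ∈ A' := by
    rw [hmemA']
    show (x - x) + x ∈ A
    simpa using hx
  obtain ⟨u, hu, r, hr, hur⟩ := hmain hwx
  -- push forward
  refine ⟨(u : E) + x, ?_, (r : E), ?_, ?_⟩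
  · have : g u ∈ g '' (convexHull ℝ (Set.extremePoints ℝ A')) := Set.mem_image_of_mem g hu
    rw [AffineMap.image_convexHull, ← extremePoints_image_affine g ginj, himg] at this
    exact this
  · intro y hy t ht
    have hyA' : y ∈ g '' A' := himg.symm ▸ hy
    obtain ⟨w', hw', rfl⟩ := hyA'
    have hmem := hr w' hw' t ht
    rw [hmemA'] at hmem
    push_cast at hmem
    rw [hgeval]
    have heq : ((w' : E) + x) + t • (↑r : E) = ↑w' + t • (↑r : E) + x := by abel
    rwa [heq]
  · have h2 : (u : E) + (r : E) = (0 : E) := by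
      have h3 := congrArg (Subtype.val) hur
      push_cast at h3
      simpa using h3
    calc (u : E) + x + (r : E) = ((u : E) + (r : E)) + x := by abel
      _ = x := by rw [h2, zero_add]

section Asym

theorem statement17_normed {E : Type} [NormedAddCommGroup E] [NormedSpace ℝ E]
    [FiniteDimensional ℝ E] (q : E → ℝ) (hq : IsAsymmetricNorm q) :
    closedBallA q 0 1 =
      convexHull ℝ (Set.extremePoints ℝ (closedBallA q 0 1 + theta q)) + theta q := by
  have hq0 : q 0 = 0 := by simpa using hq.smul_eq 0 le_rfl 0
  set B := closedBallA q 0 1 with hB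
  have hBmem : ∀ y : E, y ∈ B ↔ q y ≤ 1 := fun y => by
    rw [hB]; show q (y - 0) ≤ 1 ↔ q y ≤ 1; rw [sub_zero]
  have hθmem : ∀ y : E, y ∈ theta q ↔ q y = 0 := fun y => Iff.rfl
  have hconvOn : ConvexOn ℝ Set.univ q := by
    refine ⟨convex_univ, fun x _ y _ a b ha hb hab => ?_⟩
    calc q (a • x + b • y) ≤ q (a • x) + q (b • y) := hq.add_le _ _
      _ = a * q x + b * q y := by rw [hq.smul_eq a ha, hq.smul_eq b hb]
      _ = a • q x + b • q y := rfl
  have hqc : Continuous q :=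
    continuousOn_univ.1 (hconvOn.continuousOn isOpen_univ)
  have hBcl : IsClosed B := by
    have : B = q ⁻¹' (Set.Iic 1) := by ext y; rw [hBmem y]; rfl
    rw [this]
    exact isClosed_Iic.preimage hqc
  have hθcl : IsClosed (theta q) := by
    have : theta q = q ⁻¹' {0} := rfl
    rw [this]
    exact isClosed_singleton.preimage hqc
  have hBconv : Convex ℝ B := by
    intro x hx y hy a b ha hb hab
    rw [hBmem] at hx hy ⊢
    calc q (a • x + b • y) ≤ q (a • x) + q (b • y) := hq.add_le _ _
      _ = a * q x + b * q y := by rw [hq.smul_eq a ha, hq.smul_eq b hb]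
      _ ≤ a * 1 + b * 1 := by
          apply add_le_add (mul_le_mul_of_nonneg_left hx ha) (mul_le_mul_of_nonneg_left hy hb)
      _ = 1 := by rw [mul_one, mul_one, hab]
  have hθrec : theta q ⊆ recc B := by
    intro t ht x hx s hs
    rw [hBmem] at hx ⊢
    calc q (x + s • t) ≤ q x + q (s • t) := hq.add_le _ _
      _ = q x + s * q t := by rw [hq.smul_eq s hs]
      _ = q x := by rw [hθmem] at ht; rw [ht, mul_zero, add_zero]
      _ ≤ 1 := hx
  have hrecθ : recc B ⊆ theta q := by
    intro v hv
    rw [hθmem]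
    by_contra hne
    have hpos : 0 < q v := (hq.nonneg v).lt_of_ne (Ne.symm hne)
    have h0B : (0 : E) ∈ B := by rw [hBmem, hq0]; norm_num
    have hmem := hv 0 h0B (2 / q v) (by positivity)
    rw [hBmem, zero_add, hq.smul_eq _ (by positivity), div_mul_cancel₀ 2 hpos.ne'] at hmem
    linarith
  have hBθ : B + theta q = B := by
    apply Set.Subset.antisymm
    · rintro _ ⟨b, hb, t, ht, rfl⟩
      rw [hBmem] at hb ⊢
      calc q (b + t) ≤ q b + q t := hq.add_le _ _
        _ = q b := by rw [hθmem] at ht; rw [ht, add_zero]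
        _ ≤ 1 := hb
    · intro x hx
      exact ⟨x, hx, 0, hq0, add_zero x⟩
  have hlfB : LineFree B := by
    intro x hx v hline
    have haux : ∀ w : E, (∀ t : ℝ, 0 ≤ t → x + t • w ∈ B) → q w = 0 := by
      intro w hw
      by_contra hne
      have hpos : 0 < q w := (hq.nonneg w).lt_of_ne (Ne.symm hne)
      set t := (2 + q (-x)) / q w with htdef
      have hqx : 0 ≤ q (-x) := hq.nonneg _
      have ht0 : 0 ≤ t := div_nonneg (by linarith) hpos.le
      have hmem := hw t ht0
      rw [hBmem] at hmem
      have hle : q (t • w) ≤ q (x + t • w) + q (-x) := by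
        have h := hq.add_le (x + t • w) (-x)
        have heq : x + t • w + -x = t • w := by abel
        rwa [heq] at h
      rw [hq.smul_eq t ht0, htdef, div_mul_cancel₀ _ hpos.ne'] at hle
      linarith
    exact hq.eq_zero v (haux v fun t _ => hline t)
      (haux (-v) fun t _ => by
        have := hline (-t)
        rwa [neg_smul, ← smul_neg] at this)
  rw [hBθ]
  apply Set.Subset.antisymm
  · intro x hx
    obtain ⟨u, hu, r, hr, rfl⟩ :=
      klee (finrank ℝ (affineSpan ℝ B).direction) E B hBcl hBconv hlfB le_rfl hx
    exact ⟨u, hu, r, hrecθ hr, rfl⟩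
  · rintro _ ⟨u, hu, t, ht, rfl⟩
    have huB : u ∈ B := convexHull_min extremePoints_subset hBconv hu
    rw [hBmem] at huB ⊢
    calc q (u + t) ≤ q u + q t := hq.add_le _ _
      _ = q u := by rw [hθmem] at ht; rw [ht, add_zero]
      _ ≤ 1 := huB

end Asym

theorem statement17 {X : Type*} [AddCommGroup X] [Module ℝ X] [FiniteDimensional ℝ X]
    (q : X → ℝ) (hq : IsAsymmetricNorm q) :
    closedBallA q 0 1 =
      convexHull ℝ (Set.extremePoints ℝ (closedBallA q 0 1 + theta q)) + theta q := by
  classical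
  set n := finrank ℝ X with hn
  let e : X ≃ₗ[ℝ] (Fin n → ℝ) := (Module.finBasis ℝ X).equivFun
  set p : (Fin n → ℝ) → ℝ := fun y => q (e.symm y) with hp
  have hpn : IsAsymmetricNorm p := by
    constructor
    · intro y
      exact hq.nonneg _
    · intro a ha y
      show q (e.symm (a • y)) = a * q (e.symm y)
      rw [map_smul]
      exact hq.smul_eq a ha _
    · intro x y
      show q (e.symm (x + y)) ≤ q (e.symm x) + q (e.symm y)
      rw [map_add]
      exact hq.add_le _ _
    · intro y h1 h2
      have h2' : q (-(e.symm y)) = 0 := by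
        rw [← map_neg]
        exact h2
      have h3 := hq.eq_zero (e.symm y) h1 h2'
      exact e.symm.injective (by rw [h3, map_zero])
  have hkey := statement17_normed p hpn
  have hmemB : ∀ x : X, x ∈ closedBallA q 0 1 ↔ q x ≤ 1 := fun x => by
    show q (x - 0) ≤ 1 ↔ _
    rw [sub_zero]
  have hmemB' : ∀ y : Fin n → ℝ, y ∈ closedBallA p 0 1 ↔ p y ≤ 1 := fun y => by
    show p (y - 0) ≤ 1 ↔ _
    rw [sub_zero]
  have himB : ⇑e '' closedBallA q 0 1 = closedBallA p 0 1 := by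
    ext y
    rw [hmemB']
    constructor
    · rintro ⟨x, hx, rfl⟩
      show q (e.symm (e x)) ≤ 1
      rw [e.symm_apply_apply]
      exact (hmemB x).1 hx
    · intro hy
      exact ⟨e.symm y, (hmemB _).2 hy, e.apply_symm_apply y⟩
  have himθ : ⇑e '' theta q = theta p := by
    ext y
    constructor
    · rintro ⟨x, hx, rfl⟩
      show q (e.symm (e x)) = 0
      rw [e.symm_apply_apply]
      exact hx
    · intro hy
      exact ⟨e.symm y, hy, e.apply_symm_apply y⟩
  have h1 : ⇑e '' (closedBallA q 0 1 + theta q) = closedBallA p 0 1 + theta p := by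
    rw [Set.image_add, himB, himθ]
  have h2 : ⇑e '' convexHull ℝ (Set.extremePoints ℝ (closedBallA q 0 1 + theta q))
      = convexHull ℝ (Set.extremePoints ℝ (closedBallA p 0 1 + theta p)) := by
    have h3 := LinearMap.image_convexHull (e : X →ₗ[ℝ] (Fin n → ℝ))
      (Set.extremePoints ℝ (closedBallA q 0 1 + theta q))
    simp only [LinearEquiv.coe_coe] at h3
    rw [h3, image_extremePoints e, h1]
  apply Set.image_injective.2 e.injective
  rw [himB, hkey, Set.image_add, h2, himθ]
end

section
/- Let X be a finite-dimensional real vector space and q an asymmetric norm on X. If the set E of extreme points of B_1^q[0] + θ_q is q^s-bounded (i.e. E ⊆ h·B_1^{q^s}[0] for some h > 0), then q is right bounded. -/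
open Pointwise Set

open scoped RealInnerProductSpace


-- strictly positive functional on a pointed closed convex cone, inner product space version
lemma exists_pos_inner {F : Type*} [NormedAddCommGroup F] [InnerProductSpace ℝ F]
    [FiniteDimensional ℝ F] (θ : Set F) (hclosed : IsClosed θ) (hconv : Convex ℝ θ)
    (hcone : ∀ c : ℝ, 0 ≤ c → ∀ z ∈ θ, c • z ∈ θ) (h0 : (0:F) ∈ θ)
    (hpointed : ∀ z ∈ θ, -z ∈ θ → z = 0) :
    ∃ y : F, ∀ z ∈ θ, z ≠ 0 → 0 < ⟪y, z⟫ := by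
  classical
  set Kd : Set F := {y | ∀ z ∈ θ, 0 ≤ ⟪z, y⟫} with hKd
  have hKdconv : Convex ℝ Kd := by
    intro a ha b hb s t hs ht hst
    intro z hz
    have := ha z hz; have := hb z hz
    rw [inner_add_right, real_inner_smul_right, real_inner_smul_right]
    positivity
  have hKdclosed : IsClosed Kd := by
    have : Kd = ⋂ z ∈ θ, {y | 0 ≤ ⟪z, y⟫} := by
      ext y; simp [hKd]
    rw [this]
    exact isClosed_biInter fun z _ => isClosed_le continuous_const (continuous_const.inner continuous_id)
  have hKd0 : (0:F) ∈ Kd := by intro z hz; simp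
  by_cases hint : (interior Kd).Nonempty
  · obtain ⟨y, hy⟩ := hint
    refine ⟨y, fun z hz hzne => ?_⟩
    obtain ⟨ε, hε, hball⟩ := Metric.isOpen_iff.1 isOpen_interior y hy
    have hzn : (0:ℝ) < ‖z‖ := norm_pos_iff.2 hzne
    have hy' : y - (ε / (2 * ‖z‖)) • z ∈ Kd := by
      apply interior_subset
      apply hball
      rw [Metric.mem_ball, dist_eq_norm]
      have : ‖y - (ε / (2 * ‖z‖)) • z - y‖ = (ε / (2 * ‖z‖)) * ‖z‖ := by
        rw [sub_sub_cancel_left, norm_neg, norm_smul, Real.norm_eq_abs, abs_of_pos (by positivity)]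
      rw [this, div_mul_eq_mul_div, div_lt_iff₀ (by positivity)]
      nlinarith
    have h2 := hy' z hz
    rw [inner_sub_right, real_inner_smul_right, real_inner_self_eq_norm_sq] at h2
    have : 0 < ε / (2 * ‖z‖) * (‖z‖^2) := by positivity
    rw [real_inner_comm]
    linarith
  · exfalso
    -- interior empty : span Kd ≠ ⊤
    have haff : affineSpan ℝ Kd ≠ ⊤ := by
      intro htop
      exact hint ((hKdconv.interior_nonempty_iff_affineSpan_eq_top).2 htop)
    have hspan : Submodule.span ℝ Kd ≠ ⊤ := by
      intro htop
      apply haff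
      apply AffineSubspace.coe_injective
      have hco : (↑(affineSpan ℝ (insert (0:F) Kd)) : Set F) = ↑(Submodule.span ℝ Kd) :=
        affineSpan_insert_zero Kd
      rw [Set.insert_eq_self.2 hKd0] at hco
      rw [hco, htop]
      simp
    obtain ⟨v, hvmem, hvne⟩ : ∃ v : F, v ∈ (Submodule.span ℝ Kd)ᗮ ∧ v ≠ 0 := by
      by_contra hcon
      push_neg at hcon
      apply hspan
      rw [← Submodule.orthogonal_eq_bot_iff]
      ext v; simp only [Submodule.mem_bot]
      constructor
      · intro hv; by_contra hne; exact hne (hcon v hv)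
      · intro hv; subst hv; exact Submodule.zero_mem _
    have hvKd : ∀ y ∈ Kd, ⟪y, v⟫ = 0 := by
      intro y hy
      exact (Submodule.mem_orthogonal _ v).1 hvmem y (Submodule.subset_span hy)
    -- v and -v are in θ by Farkas
    have hadd : ∀ x ∈ θ, ∀ y ∈ θ, x + y ∈ θ := by
      intro x hx y hy
      have hmid : (1/2 : ℝ) • x + (1/2 : ℝ) • y ∈ θ :=
        hconv hx hy (by norm_num) (by norm_num) (by norm_num)
      have := hcone 2 (by norm_num) _ hmid
      have heq : (2:ℝ) • ((1/2 : ℝ) • x + (1/2 : ℝ) • y) = x + y := by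
        rw [smul_add, smul_smul, smul_smul]; norm_num
      rwa [heq] at this
    let K : ProperCone ℝ F :=
      { carrier := θ, add_mem' := fun {x y} hx hy => hadd x hx y hy, zero_mem' := h0,
        smul_mem' := fun c z hz => hcone c c.2 z hz, isClosed' := hclosed }
    have hKcoe : (K : Set F) = θ := rfl
    have key : ∀ w : F, (∀ y ∈ Kd, ⟪y, w⟫ = 0) → w ∈ θ := by
      intro w hw
      by_contra hwθ
      obtain ⟨y, hy1, hy2⟩ := K.hyperplane_separation' (x₀ := w)
        (by rw [← SetLike.mem_coe, hKcoe] at *; exact hwθ)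
      have hyKd : y ∈ Kd := fun z hz => hy1 z hz
      have hy2' : ⟪y, w⟫ < 0 := by rw [real_inner_comm]; exact hy2
      linarith [hw y hyKd]
    have hvθ : v ∈ θ := key v hvKd
    have hnvθ : -v ∈ θ := key (-v) (fun y hy => by rw [inner_neg_right, hvKd y hy, neg_zero])
    exact hvne (hpointed v hvθ hnvθ)

lemma exists_pos_functional {X : Type*} [NormedAddCommGroup X] [NormedSpace ℝ X]
    [FiniteDimensional ℝ X] (θ : Set X) (hclosed : IsClosed θ) (hconv : Convex ℝ θ)
    (hcone : ∀ c : ℝ, 0 ≤ c → ∀ z ∈ θ, c • z ∈ θ) (h0 : (0:X) ∈ θ)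
    (hpointed : ∀ z ∈ θ, -z ∈ θ → z = 0) :
    ∃ g : X →L[ℝ] ℝ, ∀ z ∈ θ, z ≠ 0 → 0 < g z := by
  set e := toEuclidean (E := X)
  set θ' : Set (EuclideanSpace ℝ (Fin (Module.finrank ℝ X))) := ⇑e '' θ with hθ'
  have himg : θ' = ⇑e.symm ⁻¹' θ := by
    rw [hθ', ContinuousLinearEquiv.image_eq_preimage_symm]
  have hclosed' : IsClosed θ' := by
    rw [himg]; exact hclosed.preimage e.symm.continuous
  have hconv' : Convex ℝ θ' := by rw [hθ']; exact hconv.linear_image e.toLinearEquiv.toLinearMap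
  have hcone' : ∀ c : ℝ, 0 ≤ c → ∀ z ∈ θ', c • z ∈ θ' := by
    rintro c hc _ ⟨z, hz, rfl⟩
    exact ⟨c • z, hcone c hc z hz, by rw [map_smul]⟩
  have h0' : (0 : EuclideanSpace ℝ (Fin (Module.finrank ℝ X))) ∈ θ' :=
    ⟨0, h0, by rw [map_zero]⟩
  have hpointed' : ∀ z ∈ θ', -z ∈ θ' → z = 0 := by
    rintro _ ⟨z, hz, rfl⟩ ⟨y, hy, hey⟩
    have : y = -z := by
      apply e.injective
      rw [hey, map_neg]
    subst this
    rw [hpointed z hz hy, map_zero]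
  obtain ⟨y, hy⟩ := exists_pos_inner θ' hclosed' hconv' hcone' h0' hpointed'
  refine ⟨(innerSL ℝ y).comp (e : X →L[ℝ] _), fun z hz hzne => ?_⟩
  exact hy (e z) ⟨z, hz, rfl⟩ (by simpa using hzne)

set_option maxHeartbeats 1000000 in
theorem statement18 {X : Type*} [AddCommGroup X] [Module ℝ X] [FiniteDimensional ℝ X]
    (q : X → ℝ) (hq : IsAsymmetricNorm q)
    (hE : ∃ h : ℝ, 0 < h ∧
      Set.extremePoints ℝ (closedBallA q 0 1 + theta q) ⊆ h • closedBallA (symNorm q) 0 1) :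
    RightBounded q := by
  classical
  obtain ⟨h, hh, hEsub⟩ := hE
  have q0 : q 0 = 0 := by simpa using hq.smul_eq 0 le_rfl 0
  have q_smul_neg : ∀ (a : ℝ), 0 ≤ a → ∀ x : X, q (-(a • x)) = a * q (-x) := by
    intro a ha x
    rw [← smul_neg, hq.smul_eq a ha]
  have qs_smul : ∀ (a : ℝ) (x : X), symNorm q (a • x) = |a| * symNorm q x := by
    intro a x
    rcases le_or_gt 0 a with ha | ha
    · rw [symNorm, symNorm, hq.smul_eq a ha, q_smul_neg a ha, abs_of_nonneg ha,
        mul_max_of_nonneg _ _ ha]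
    · have hx : a • x = (-a) • (-x) := by rw [neg_smul, smul_neg, neg_neg]
      rw [symNorm, symNorm, hx, hq.smul_eq (-a) (by linarith), q_smul_neg (-a) (by linarith),
        neg_neg, abs_of_neg ha, mul_max_of_nonneg _ _ (by linarith : (0:ℝ) ≤ -a)]
      exact max_comm _ _
  letI : NormedAddCommGroup X := AddGroupNorm.toNormedAddCommGroup
    { toFun := symNorm q
      map_zero' := by simp [symNorm, q0]
      add_le' := fun x y => by
        apply max_le
        · exact le_trans (hq.add_le x y) (add_le_add (le_max_left _ _) (le_max_left _ _))
        · rw [neg_add]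
          exact le_trans (hq.add_le (-x) (-y)) (add_le_add (le_max_right _ _) (le_max_right _ _))
      neg' := fun x => by simp only [symNorm, neg_neg]; exact max_comm _ _
      eq_zero_of_map_eq_zero' := fun x hx => by
        have h1 : q x = 0 := le_antisymm (le_trans (le_max_left _ _) hx.le) (hq.nonneg x)
        have h2 : q (-x) = 0 := le_antisymm (le_trans (le_max_right _ _) hx.le) (hq.nonneg (-x))
        exact hq.eq_zero x h1 h2 }
  letI : NormedSpace ℝ X := ⟨fun a x => le_of_eq (qs_smul a x)⟩
  have hnorm : ∀ x : X, ‖x‖ = symNorm q x := fun _ => rfl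
  have hq1 : ∀ x : X, q x ≤ ‖x‖ := fun x => le_max_left _ _
  have hqcont : Continuous q := by
    apply (LipschitzWith.of_dist_le_mul (K := 1) ?_).continuous
    intro x y
    rw [Real.dist_eq, dist_eq_norm, NNReal.coe_one, one_mul, abs_sub_le_iff]
    constructor
    · have := hq.add_le (x - y) y
      rw [sub_add_cancel] at this
      linarith [hq1 (x - y)]
    · have := hq.add_le (y - x) x
      rw [sub_add_cancel] at this
      have hn : ‖y - x‖ = ‖x - y‖ := norm_sub_rev _ _
      linarith [hq1 (y - x), hn.le, hn.ge]
  set θ : Set X := theta q with hθdef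
  have hθc : IsClosed θ := by
    have : θ = q ⁻¹' {0} := rfl
    rw [this]
    exact IsClosed.preimage hqcont isClosed_singleton
  have hθconv : Convex ℝ θ := by
    intro a ha b hb s t hs ht hst
    have h1 : q (s • a + t • b) ≤ s * q a + t * q b :=
      le_trans (hq.add_le _ _) (by rw [hq.smul_eq s hs, hq.smul_eq t ht])
    have : q (s • a + t • b) ≤ 0 := by
      rw [show q a = 0 from ha, show q b = 0 from hb] at h1; linarith
    exact le_antisymm this (hq.nonneg _)
  have hθcone : ∀ c : ℝ, 0 ≤ c → ∀ z ∈ θ, c • z ∈ θ := by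
    intro c hc z hz
    show q _ = 0
    rw [hq.smul_eq c hc, show q z = 0 from hz, mul_zero]
  have hθ0 : (0:X) ∈ θ := q0
  have hθpointed : ∀ z ∈ θ, -z ∈ θ → z = 0 := fun z hz hnz => hq.eq_zero z hz hnz
  obtain ⟨g, hg⟩ := exists_pos_functional θ hθc hθconv hθcone hθ0 hθpointed
  have hgθ : ∀ z ∈ θ, 0 ≤ g z := by
    intro z hz
    rcases eq_or_ne z 0 with rfl | hne
    · simp
    · exact (hg z hz hne).le
  -- the set C
  set C : Set X := closedBallA q 0 1 + theta q with hCdef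
  have hballq : ∀ y : X, y ∈ closedBallA q 0 1 ↔ q y ≤ 1 := by
    intro y; constructor <;> · intro hy; simpa [closedBallA] using hy
  have hCmem : ∀ y : X, y ∈ C ↔ ∃ p z : X, q p ≤ 1 ∧ z ∈ θ ∧ p + z = y := by
    intro y
    rw [hCdef, Set.mem_add]
    constructor
    · rintro ⟨p, hp, z, hz, rfl⟩
      exact ⟨p, z, (hballq p).1 hp, hz, rfl⟩
    · rintro ⟨p, z, hp, hz, rfl⟩
      exact ⟨p, (hballq p).2 hp, z, hz, rfl⟩
  have hqC : ∀ y ∈ C, q y ≤ 1 := by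
    intro y hy
    obtain ⟨p, z, hp, hz, rfl⟩ := (hCmem y).1 hy
    have := hq.add_le p z
    rw [show q z = 0 from hz] at this
    linarith
  have hballconv : Convex ℝ (closedBallA q 0 1) := by
    intro a ha b hb s t hs ht hst
    rw [hballq] at *
    calc q (s • a + t • b) ≤ s * q a + t * q b :=
          le_trans (hq.add_le _ _) (by rw [hq.smul_eq s hs, hq.smul_eq t ht])
      _ ≤ s * 1 + t * 1 := by
          nlinarith [mul_le_mul_of_nonneg_left ha hs, mul_le_mul_of_nonneg_left hb ht]
      _ = 1 := by linarith
  have hCconv : Convex ℝ C := hballconv.add hθconv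
  have h0C : (0:X) ∈ C := (hCmem 0).2 ⟨0, 0, by rw [q0]; norm_num, hθ0, by simp⟩
  -- coercivity
  have hcoer : ∃ c : ℝ, 0 < c ∧ ∀ y ∈ C, ‖y‖ ≤ c * (1 + max (g y) 0) := by
    by_contra hcon
    push_neg at hcon
    have hsel : ∀ n : ℕ, ∃ y ∈ C, ((n:ℝ)+1) * (1 + max (g y) 0) < ‖y‖ := by
      intro n
      obtain ⟨y, hyC, hy⟩ := hcon ((n:ℝ)+1) (by positivity)
      exact ⟨y, hyC, hy⟩
    choose y hyC hy using hsel
    have hmaxpos : ∀ n, (0:ℝ) < 1 + max (g (y n)) 0 := by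
      intro n
      have : (0:ℝ) ≤ max (g (y n)) 0 := le_max_right _ _
      linarith
    have hcast : ∀ n : ℕ, (0:ℝ) ≤ (n:ℝ) := fun n => Nat.cast_nonneg n
    have hynpos : ∀ n, (0:ℝ) < ‖y n‖ := by
      intro n
      nlinarith [hy n, le_max_right (g (y n)) (0:ℝ), hcast n]
    have hyn1 : ∀ n : ℕ, ((n:ℝ)+1) ≤ ‖y n‖ := by
      intro n
      nlinarith [hy n, le_max_right (g (y n)) (0:ℝ), hcast n]
    set u : ℕ → X := fun n => ‖y n‖⁻¹ • y n with hu
    have humem : ∀ n, u n ∈ Metric.sphere (0:X) 1 := by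
      intro n
      simp only [Metric.mem_sphere, dist_zero_right, hu, norm_smul, norm_inv, norm_norm]
      rw [inv_mul_cancel₀ (hynpos n).ne']
    obtain ⟨l, hl, φ, hφ, hconv⟩ := (isCompact_sphere (0:X) 1).tendsto_subseq humem
    have hlne : l ≠ 0 := by
      intro h0
      rw [h0] at hl
      simp at hl
    have hqu : ∀ n, q (u n) ≤ 1/((n:ℝ)+1) := by
      intro n
      rw [hu]
      simp only
      rw [hq.smul_eq _ (by positivity)]
      calc ‖y n‖⁻¹ * q (y n) ≤ ‖y n‖⁻¹ * 1 := by
            apply mul_le_mul_of_nonneg_left (hqC _ (hyC n)) (by positivity)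
        _ ≤ 1/((n:ℝ)+1) := by
            rw [mul_one, ← one_div]
            apply one_div_le_one_div_of_le (by positivity) (hyn1 n)
    have hgu : ∀ n, g (u n) ≤ 1/((n:ℝ)+1) := by
      intro n
      rw [hu]
      simp only [map_smul, smul_eq_mul]
      have h1 : g (y n) ≤ max (g (y n)) 0 := le_max_left _ _
      have h2 : ‖y n‖⁻¹ * g (y n) ≤ ‖y n‖⁻¹ * (1 + max (g (y n)) 0) := by
        apply mul_le_mul_of_nonneg_left (by linarith) (by positivity)
      have h3 : ‖y n‖⁻¹ * (1 + max (g (y n)) 0) ≤ 1/((n:ℝ)+1) := by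
        rw [inv_mul_le_iff₀ (hynpos n), mul_one_div, le_div_iff₀ (by positivity)]
        nlinarith [hy n]
      linarith
    have htend0 : Filter.Tendsto (fun n : ℕ => 1/((n:ℝ)+1)) Filter.atTop (nhds 0) :=
      tendsto_one_div_add_atTop_nhds_zero_nat
    have hmono : ∀ n : ℕ, 1/((φ n : ℝ)+1) ≤ 1/((n:ℝ)+1) := by
      intro n
      apply one_div_le_one_div_of_le (by positivity)
      have h1 : (n:ℝ) ≤ (φ n : ℝ) := Nat.cast_le.2 hφ.le_apply
      linarith
    have hql : q l ≤ 0 := by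
      have ht1 : Filter.Tendsto (fun n => q (u (φ n))) Filter.atTop (nhds (q l)) :=
        (hqcont.tendsto l).comp hconv
      refine le_of_tendsto_of_tendsto' ht1 htend0 fun n => le_trans (hqu (φ n)) (hmono n)
    have hgl : g l ≤ 0 := by
      have ht1 : Filter.Tendsto (fun n => g (u (φ n))) Filter.atTop (nhds (g l)) :=
        (g.continuous.tendsto l).comp hconv
      refine le_of_tendsto_of_tendsto' ht1 htend0 fun n => le_trans (hgu (φ n)) (hmono n)
    have hlθ : l ∈ θ := le_antisymm hql (hq.nonneg l)
    linarith [hg l hlθ hlne]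
  obtain ⟨c, hc, hcoer⟩ := hcoer
  -- C is closed
  have hCclosed : IsClosed C := by
    apply IsSeqClosed.isClosed
    intro f l hf hfl
    choose p z hp hz hsum using fun n => (hCmem (f n)).1 (hf n)
    have hgf : Filter.Tendsto (fun n => g (f n)) Filter.atTop (nhds (g l)) :=
      (g.continuous.tendsto l).comp hfl
    obtain ⟨M, hM⟩ := hgf.bddAbove_range
    have hgp : ∀ n, g (p n) ≤ M := by
      intro n
      have h1 : g (f n) ≤ M := hM ⟨n, rfl⟩
      have h2 : 0 ≤ g (z n) := hgθ _ (hz n)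
      have h3 : g (p n) + g (z n) = g (f n) := by rw [← map_add, hsum n]
      linarith
    have hpC : ∀ n, p n ∈ C := fun n => (hCmem (p n)).2 ⟨p n, 0, hp n, hθ0, by simp⟩
    have hpbdd : ∀ n, p n ∈ Metric.closedBall (0:X) (c * (1 + max M 0)) := by
      intro n
      rw [Metric.mem_closedBall, dist_zero_right]
      calc ‖p n‖ ≤ c * (1 + max (g (p n)) 0) := hcoer _ (hpC n)
        _ ≤ c * (1 + max M 0) := by
            apply mul_le_mul_of_nonneg_left _ hc.le
            have := max_le_max (hgp n) (le_refl (0:ℝ))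
            linarith
    obtain ⟨pl, hpl, φ, hφ, hpconv⟩ := (isCompact_closedBall (0:X) _).tendsto_subseq hpbdd
    have hqpl : q pl ≤ 1 := by
      have ht1 : Filter.Tendsto (fun n => q (p (φ n))) Filter.atTop (nhds (q pl)) :=
        (hqcont.tendsto pl).comp hpconv
      exact le_of_tendsto ht1 (Filter.Eventually.of_forall fun n => hp (φ n))
    have hzconv : Filter.Tendsto (fun n => f (φ n) - p (φ n)) Filter.atTop (nhds (l - pl)) :=
      Filter.Tendsto.sub (hfl.comp hφ.tendsto_atTop) hpconv
    have hzθ : l - pl ∈ θ := by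
      apply hθc.mem_of_tendsto hzconv
      apply Filter.Eventually.of_forall
      intro n
      have : f (φ n) - p (φ n) = z (φ n) := by rw [← hsum (φ n)]; abel
      rw [this]
      exact hz (φ n)
    exact (hCmem l).2 ⟨pl, l - pl, hqpl, hzθ, by abel⟩
  -- A = h-ball
  have hA : h • closedBallA (symNorm q) 0 1 = Metric.closedBall (0:X) h := by
    ext y
    rw [Set.mem_smul_set, Metric.mem_closedBall, dist_zero_right]
    constructor
    · rintro ⟨z, hzmem, rfl⟩
      have hz1 : symNorm q z ≤ 1 := by simpa [closedBallA] using hzmem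
      rw [hnorm, qs_smul, abs_of_pos hh]
      calc h * symNorm q z ≤ h * 1 := mul_le_mul_of_nonneg_left hz1 hh.le
        _ = h := mul_one h
    · intro hy
      refine ⟨h⁻¹ • y, ?_, by rw [smul_smul, mul_inv_cancel₀ hh.ne', one_smul]⟩
      show symNorm q (h⁻¹ • y - 0) ≤ 1
      rw [sub_zero, qs_smul, abs_of_pos (by positivity), ← hnorm]
      rw [inv_mul_le_iff₀ hh, mul_one]
      exact hy
  -- main decomposition
  have hmain : ∀ x : X, q x ≤ 1 → ∃ p : X, ‖p‖ ≤ h ∧ q (x - p) = 0 := by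
    intro x hx
    have hxC : x ∈ C := (hCmem x).2 ⟨x, 0, hx, hθ0, by simp⟩
    set G : ℝ := h * ‖g‖ with hGdef
    have hGnn : 0 ≤ G := by positivity
    have haG : ∀ a : X, ‖a‖ ≤ h → |g a| ≤ G := by
      intro a ha
      calc |g a| = ‖g a‖ := rfl
        _ ≤ ‖g‖ * ‖a‖ := g.le_opNorm a
        _ ≤ ‖g‖ * h := by gcongr
        _ = G := by rw [hGdef]; ring
    set T0 : ℝ := max (g x) 0 + G + 1 with hT0
    set t : ℕ → ℝ := fun n => ((n:ℝ)+1) + T0 with ht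
    have htG : ∀ n : ℕ, ((n:ℝ)+1) ≤ t n - G := by
      intro n
      have h1 := le_max_right (g x) (0:ℝ)
      simp only [ht, hT0]
      linarith
    have htx : ∀ n : ℕ, g x ≤ t n := by
      intro n
      have h1 := le_max_left (g x) (0:ℝ)
      have h2 : (0:ℝ) ≤ (n:ℝ) := Nat.cast_nonneg n
      simp only [ht, hT0]
      linarith
    set N0 : ℝ := |g x| + ‖g‖ + G with hN0
    have hN0nn : 0 ≤ N0 := by positivity
    set A : Set X := Metric.closedBall (0:X) h with hAdef
    have hAconv : Convex ℝ A := convex_closedBall _ _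
    have h0A : (0:X) ∈ A := by simp [hAdef, hh.le]
    set K : ℕ → Set X := fun n => C ∩ {y | g y ≤ t n} with hK
    have hKconv : ∀ n, Convex ℝ (K n) :=
      fun n => hCconv.inter (convex_halfSpace_le (g : X →ₗ[ℝ] ℝ).isLinear (t n))
    have hKcomp : ∀ n, IsCompact (K n) := by
      intro n
      apply Metric.isCompact_of_isClosed_isBounded
      · exact hCclosed.inter (isClosed_le g.continuous continuous_const)
      · apply (Metric.isBounded_closedBall (x := (0:X)) (r := c * (1 + max (t n) 0))).subset
        intro y hy
        rw [Metric.mem_closedBall, dist_zero_right]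
        calc ‖y‖ ≤ c * (1 + max (g y) 0) := hcoer y hy.1
          _ ≤ c * (1 + max (t n) 0) := by
              apply mul_le_mul_of_nonneg_left _ hc.le
              have := max_le_max (hy.2 : g y ≤ t n) (le_refl (0:ℝ))
              linarith
    have hxK : ∀ n, x ∈ K n := fun n => ⟨hxC, htx n⟩
    have hKM : ∀ n, x ∈ closure (convexHull ℝ ((K n).extremePoints ℝ)) := by
      intro n
      rw [closure_convexHull_extremePoints (hKcomp n) (hKconv n)]
      exact hxK n
    have hext : ∀ n : ℕ, (K n).extremePoints ℝ ⊆ A ∪ (C ∩ {y | g y = t n}) := by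
      intro n y hy
      rcases eq_or_lt_of_le (show g y ≤ t n from hy.1.2) with heq | hlt
      · exact Or.inr ⟨hy.1.1, heq⟩
      · left
        have hyext : y ∈ Set.extremePoints ℝ C := by
          refine mem_extremePoints.2 ⟨hy.1.1, fun a ha b hb hseg => ?_⟩
          obtain ⟨μ, ν, hμ, hν, hμν, hcomb⟩ := hseg
          set D : ℝ := max |g a - g y| |g b - g y| with hD
          have hDnn : (0:ℝ) ≤ D := le_trans (abs_nonneg _) (le_max_left _ _)
          have htny : 0 < t n - g y := by linarith
          set s : ℝ := min 1 ((t n - g y)/(D+1)) with hs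
          have hspos : 0 < s := lt_min one_pos (by positivity)
          have hs1 : s ≤ 1 := min_le_left _ _
          have hsD : s * D ≤ t n - g y := by
            calc s * D ≤ ((t n - g y)/(D+1)) * D := by
                  exact mul_le_mul_of_nonneg_right (min_le_right _ _) hDnn
              _ ≤ t n - g y := by
                  rw [div_mul_eq_mul_div, div_le_iff₀ (by positivity)]
                  nlinarith
          set a' : X := y + s • (a - y) with ha'
          set b' : X := y + s • (b - y) with hb'
          have hcomba : a' = (1-s) • y + s • a := by
            rw [ha', smul_sub, sub_smul, one_smul]; abel
          have hcombb : b' = (1-s) • y + s • b := by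
            rw [hb', smul_sub, sub_smul, one_smul]; abel
          have hga' : g a' = g y + s * (g a - g y) := by
            rw [ha', map_add, map_smul, smul_eq_mul, map_sub]
          have hgb' : g b' = g y + s * (g b - g y) := by
            rw [hb', map_add, map_smul, smul_eq_mul, map_sub]
          have hmema' : a' ∈ K n := by
            constructor
            · rw [hcomba]
              exact hCconv hy.1.1 ha (by linarith) hspos.le (by ring)
            · show g a' ≤ t n
              rw [hga']
              have h1 : s * (g a - g y) ≤ s * D := by
                apply mul_le_mul_of_nonneg_left _ hspos.le
                exact le_trans (le_abs_self _) (le_max_left _ _)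
              linarith
          have hmemb' : b' ∈ K n := by
            constructor
            · rw [hcombb]
              exact hCconv hy.1.1 hb (by linarith) hspos.le (by ring)
            · show g b' ≤ t n
              rw [hgb']
              have h1 : s * (g b - g y) ≤ s * D := by
                apply mul_le_mul_of_nonneg_left _ hspos.le
                exact le_trans (le_abs_self _) (le_max_right _ _)
              linarith
          have hyseg : y ∈ openSegment ℝ a' b' := by
            refine ⟨μ, ν, hμ, hν, hμν, ?_⟩
            have e0 : (s*μ) • a + (s*ν) • b = s • y := by
              rw [← hcomb, smul_add, smul_smul, smul_smul]
            have e1 : μ • a' + ν • b' =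
                (μ + ν) • y + ((s*μ) • a + (s*ν) • b) - ((s*μ) • y + (s*ν) • y) := by
              simp only [ha', hb', smul_add, smul_sub, smul_smul, add_smul]
              rw [mul_comm μ s, mul_comm ν s]
              abel
            rw [e1, e0, hμν, one_smul]
            have e2 : (s*μ) • y + (s*ν) • y = s • y := by
              rw [← add_smul, ← mul_add, hμν, mul_one]
            rw [e2]
            abel
          obtain ⟨ea, eb⟩ := (mem_extremePoints.1 hy).2 _ hmema' _ hmemb' hyseg
          constructor
          · have : s • (a - y) = 0 := by
              have := ea
              rw [ha'] at this
              have h2 : y + s • (a - y) - y = 0 := by rw [this]; abel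
              rwa [add_sub_cancel_left] at h2
            rcases smul_eq_zero.1 this with h3 | h3
            · exact absurd h3 hspos.ne'
            · rw [sub_eq_zero] at h3; exact h3
          · have : s • (b - y) = 0 := by
              have := eb
              rw [hb'] at this
              have h2 : y + s • (b - y) - y = 0 := by rw [this]; abel
              rwa [add_sub_cancel_left] at h2
            rcases smul_eq_zero.1 this with h3 | h3
            · exact absurd h3 hspos.ne'
            · rw [sub_eq_zero] at h3; exact h3
        have := hEsub (hCdef ▸ hyext)
        rwa [hA] at this
    have hxn : ∀ n : ℕ, ∃ xn, xn ∈ convexHull ℝ ((K n).extremePoints ℝ) ∧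
        dist x xn < 1/((n:ℝ)+1) := by
      intro n
      obtain ⟨b, hb1, hb2⟩ := Metric.mem_closure_iff.1 (hKM n) (1/((n:ℝ)+1)) (by positivity)
      exact ⟨b, hb1, hb2⟩
    choose xn hxn1 hxn2 using hxn
    have hgxn : ∀ n : ℕ, |g (xn n)| ≤ |g x| + ‖g‖ := by
      intro n
      have h1 : |g (xn n) - g x| ≤ ‖g‖ * ‖xn n - x‖ := by
        have := g.le_opNorm (xn n - x)
        rwa [map_sub] at this
      have h2 : ‖xn n - x‖ ≤ 1 := by
        rw [← dist_eq_norm, dist_comm]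
        have h3 : 1/((n:ℝ)+1) ≤ 1 := by
          rw [div_le_one (by positivity)]
          linarith [Nat.cast_nonneg (α := ℝ) n]
        linarith [hxn2 n]
      have h4 : ‖g‖ * ‖xn n - x‖ ≤ ‖g‖ * 1 := by gcongr
      calc |g (xn n)| ≤ |g x| + |g (xn n) - g x| := by
            have := abs_add_le (g x) (g (xn n) - g x)
            simpa using this
        _ ≤ |g x| + ‖g‖ := by linarith
    have hdecomp : ∀ n : ℕ, ∃ p, ‖p‖ ≤ h ∧ q (xn n - p) ≤ N0/((n:ℝ)+1) := by
      intro n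
      set B : Set X := C ∩ {y | g y = t n} with hB
      have hBconv : Convex ℝ B := hCconv.inter (convex_hyperplane (g : X →ₗ[ℝ] ℝ).isLinear (t n))
      rcases Set.eq_empty_or_nonempty B with hBe | hBne
      · have hsubA : (K n).extremePoints ℝ ⊆ A := by
          intro y hy
          rcases hext n hy with h1 | h1
          · exact h1
          · rw [← hB, hBe] at h1; exact absurd h1 (Set.notMem_empty y)
        have hxnA : xn n ∈ A := convexHull_min hsubA hAconv (hxn1 n)
        refine ⟨xn n, ?_, ?_⟩
        · rw [hAdef, Metric.mem_closedBall, dist_zero_right] at hxnA; exact hxnA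
        · rw [sub_self, q0]; positivity
      · have hsub : convexHull ℝ ((K n).extremePoints ℝ) ⊆ convexJoin ℝ A B := by
          rw [← hAconv.convexHull_union hBconv ⟨0, h0A⟩ hBne]
          exact convexHull_mono (hext n)
        obtain ⟨a, haA, b, hbB, hseg⟩ := mem_convexJoin.1 (hsub (hxn1 n))
        obtain ⟨μ, ν, hμ, hν, hμν, hcomb⟩ := hseg
        have hanorm : ‖a‖ ≤ h := by
          rw [hAdef, Metric.mem_closedBall, dist_zero_right] at haA; exact haA
        refine ⟨μ • a, ?_, ?_⟩
        · rw [norm_smul, Real.norm_eq_abs, abs_of_nonneg hμ]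
          calc μ * ‖a‖ ≤ 1 * h := by
                apply mul_le_mul (by linarith) hanorm (norm_nonneg _) zero_le_one
            _ = h := one_mul h
        · have hxnp : xn n - μ • a = ν • b := by rw [← hcomb]; abel
          rw [hxnp, hq.smul_eq ν hν]
          have hqb : q b ≤ 1 := hqC b hbB.1
          have hgb : g b = t n := hbB.2
          have hga : |g a| ≤ G := haG a hanorm
          have e1 : g (xn n) = μ * g a + ν * g b := by
            rw [← hcomb, map_add, map_smul, map_smul, smul_eq_mul, smul_eq_mul]
          have e2 : ν * (t n - g a) = g (xn n) - g a := by
            rw [e1, hgb]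
            have hμeq : μ = 1 - ν := by linarith
            rw [hμeq]; ring
          have e3 : ((n:ℝ)+1) ≤ t n - g a := by
            have h5 := htG n
            have h6 : g a ≤ G := (abs_le.1 hga).2
            linarith
          have hnpos : (0:ℝ) < (n:ℝ)+1 := by positivity
          have hν' : ν ≤ N0/((n:ℝ)+1) := by
            rw [le_div_iff₀ hnpos]
            calc ν * ((n:ℝ)+1) ≤ ν * (t n - g a) := mul_le_mul_of_nonneg_left e3 hν
              _ = g (xn n) - g a := e2
              _ ≤ N0 := by
                  have h7 := le_abs_self (g (xn n))
                  have h8 := neg_abs_le (g a)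
                  have h9 := hgxn n
                  rw [hN0]; linarith
          calc ν * q b ≤ ν * 1 := mul_le_mul_of_nonneg_left hqb hν
            _ = ν := mul_one ν
            _ ≤ N0/((n:ℝ)+1) := hν'
    choose p hp hqp using hdecomp
    have hpball : ∀ n, p n ∈ Metric.closedBall (0:X) h := by
      intro n
      rw [Metric.mem_closedBall, dist_zero_right]
      exact hp n
    obtain ⟨pl, hpl, φ, hφ, hpconv⟩ := (isCompact_closedBall (0:X) h).tendsto_subseq hpball
    refine ⟨pl, by rwa [Metric.mem_closedBall, dist_zero_right] at hpl, ?_⟩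
    have hmono2 : ∀ (a : ℝ) (n : ℕ), 0 ≤ a → a/((φ n:ℝ)+1) ≤ a/((n:ℝ)+1) := by
      intro a n ha
      rw [div_le_div_iff₀ (by positivity) (by positivity)]
      have h1 : (n:ℝ) ≤ (φ n : ℝ) := Nat.cast_le.2 hφ.le_apply
      nlinarith
    have hbound : ∀ n : ℕ, q (x - p (φ n)) ≤ (1 + N0)/((n:ℝ)+1) := by
      intro n
      have h1 : q (x - p (φ n)) ≤ q (x - xn (φ n)) + q (xn (φ n) - p (φ n)) := by
        have := hq.add_le (x - xn (φ n)) (xn (φ n) - p (φ n))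
        rwa [sub_add_sub_cancel] at this
      have h2 : q (x - xn (φ n)) ≤ 1/((φ n:ℝ)+1) := by
        refine le_trans (hq1 _) ?_
        rw [← dist_eq_norm]
        exact (hxn2 (φ n)).le
      have h3 := hqp (φ n)
      have h4 := hmono2 1 n zero_le_one
      have h5 := hmono2 N0 n hN0nn
      have h6 : (1 + N0)/((n:ℝ)+1) = 1/((n:ℝ)+1) + N0/((n:ℝ)+1) := by
        rw [add_div]
      linarith
    have htq : Filter.Tendsto (fun n => q (x - p (φ n))) Filter.atTop (nhds (q (x - pl))) :=
      (hqcont.tendsto _).comp (tendsto_const_nhds.sub hpconv)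
    have htz : Filter.Tendsto (fun n : ℕ => (1 + N0)/((n:ℝ)+1)) Filter.atTop (nhds 0) := by
      have := tendsto_one_div_add_atTop_nhds_zero_nat.const_mul (1 + N0)
      rw [mul_zero] at this
      convert this using 2 with n
      rw [mul_one_div]
    have hle0 : q (x - pl) ≤ 0 := le_of_tendsto_of_tendsto' htq htz hbound
    exact le_antisymm hle0 (hq.nonneg _)
  -- conclusion
  refine ⟨1/h, by positivity, ?_⟩
  rintro y ⟨x, hx, rfl⟩
  obtain ⟨p, hp, hxp⟩ := hmain x ((hballq x).1 hx)
  rw [Set.mem_add]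
  refine ⟨(1/h) • p, ?_, (1/h) • (x - p), ?_, by rw [← smul_add]; congr 1; abel⟩
  · have : symNorm q ((1/h) • p - 0) ≤ 1 := by
      rw [sub_zero, qs_smul, abs_of_pos (show (0:ℝ) < 1/h by positivity), ← hnorm]
      calc (1/h) * ‖p‖ ≤ (1/h) * h := by gcongr
        _ = 1 := by field_simp
    exact this
  · show q _ = 0
    rw [hq.smul_eq _ (by positivity), hxp, mul_zero]
end

section
/- Let X be a finite-dimensional real vector space and q a 1-bounded asymmetric norm on X. Then every extreme point of B_1^q[0] + θ_q belongs to B_1^{q^s}[0]; in particular, the set of extreme points of B_1^q[0] + θ_q is q^s-bounded. -/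
open Pointwise Set

theorem statement19 {X : Type*} [AddCommGroup X] [Module ℝ X] [FiniteDimensional ℝ X]
    (q : X → ℝ) (hq : IsAsymmetricNorm q) (h1 : OneBounded q) :
    Set.extremePoints ℝ (closedBallA q 0 1 + theta q) ⊆ closedBallA (symNorm q) 0 1 ∧
    ∃ h : ℝ, 0 < h ∧
      Set.extremePoints ℝ (closedBallA q 0 1 + theta q) ⊆ h • closedBallA (symNorm q) 0 1 := by
  have hq0 : q 0 = 0 := by
    have := hq.smul_eq 0 le_rfl 0; simpa using this
  have key : Set.extremePoints ℝ (closedBallA q 0 1 + theta q) ⊆ closedBallA (symNorm q) 0 1 := by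
    rintro x ⟨hxA, hext⟩
    obtain ⟨b, hb, t, ht, hbt⟩ := hxA
    replace hbt : b + t = x := hbt
    simp only [closedBallA, theta, Set.mem_setOf_eq, sub_zero] at hb ht
    have hqx : q x ≤ 1 := by
      calc q x = q (b + t) := by rw [hbt]
        _ ≤ q b + q t := hq.add_le b t
        _ ≤ 1 := by rw [ht]; simpa using hb
    have hxBq : x ∈ closedBallA q 0 1 := by
      simpa [closedBallA, sub_zero] using hqx
    obtain ⟨s, hs, t', ht', hst⟩ := h1 hxBq
    replace hst : s + t' = x := hst
    simp only [closedBallA, theta, Set.mem_setOf_eq, sub_zero] at hs ht'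
    have hsq : q s ≤ 1 := le_trans (le_max_left _ _) hs
    have htt' : q (t' + t') = 0 := by
      have h1' := hq.add_le t' t'
      have h2' := hq.nonneg (t' + t')
      rw [ht'] at h1'; linarith
    have h1A : x + t' ∈ closedBallA q 0 1 + theta q := by
      refine ⟨s, ?_, t' + t', htt', ?_⟩
      · simpa [closedBallA, sub_zero] using hsq
      · show s + (t' + t') = x + t'
        rw [← hst]; abel
    have h2A : x - t' ∈ closedBallA q 0 1 + theta q := by
      refine ⟨s, ?_, 0, hq0, ?_⟩
      · simpa [closedBallA, sub_zero] using hsq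
      · show s + 0 = x - t'
        rw [← hst, add_zero, add_sub_cancel_right]
    have hseg : x ∈ openSegment ℝ (x + t') (x - t') := by
      refine ⟨1/2, 1/2, by norm_num, by norm_num, by norm_num, ?_⟩
      rw [smul_add, smul_sub, ← add_sub_assoc]
      rw [show ((1:ℝ)/2) • x + ((1:ℝ)/2) • t' + ((1:ℝ)/2) • x - ((1:ℝ)/2) • t'
            = ((1:ℝ)/2 + 1/2) • x by rw [add_smul]; abel]
      norm_num
    have heq1 := hext h1A h2A hseg
    have ht'0 : t' = 0 := by
      have : x + t' = x + 0 := by rw [add_zero]; exact heq1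
      exact add_left_cancel this
    have hxs : x = s := by rw [← hst, ht'0, add_zero]
    simpa [closedBallA, sub_zero, hxs] using hs
  refine ⟨key, 1, one_pos, ?_⟩
  rw [one_smul]
  exact key
end
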